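/- Let p be a prime and m a natural number with base-p expansion m = Σ_{j=0}^{ℓ} m_j p^j where 0 ≤ m_j < p. Then in the Laurent polynomial ring ℤ[X, X⁻¹] one has ∏_{j=0}^{ℓ} ( Σ_{k=0}^{m_j} X^{p^j (m_j − 2k)} ) = Σ_{i=0}^{m} c_i X^{m − 2i}, where c_i = 1 if the binomial coefficient C(m, i) is not divisible by p, and c_i = 0 otherwise. -/
import Mathlib


open LaurentPolynomial Finset

private lemma steinberg_aux_not_dvd (p : ℕ) (hp : p.Prime) {n i : ℕ} (hn : n < p) (hi : i ≤ n) :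
    ¬ p ∣ n.choose i := by
  intro h
  have h2 : p ∣ Nat.factorial n := by
    rw [← Nat.choose_mul_factorial_mul_factorial hi]
    exact Dvd.dvd.mul_right (Dvd.dvd.mul_right h _) _
  exact absurd ((Nat.Prime.dvd_factorial hp).mp h2) (by omega)

private lemma steinberg_aux (p : ℕ) (hp : p.Prime) :
    ∀ ℓ (d : ℕ → ℕ), (∀ j ≤ ℓ, d j < p) →
    ∀ m, m = ∑ j ∈ Finset.range (ℓ + 1), d j * p ^ j → ∀ e : ℤ,
    (∏ j ∈ Finset.range (ℓ + 1),
        ∑ k ∈ Finset.range (d j + 1),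
          (T (e * (p : ℤ) ^ j * ((d j : ℤ) - 2 * (k : ℤ))) : LaurentPolynomial ℤ))
      = ∑ i ∈ Finset.range (m + 1),
          if p ∣ m.choose i then 0
          else T (e * ((m : ℤ) - 2 * (i : ℤ))) := by
  intro ℓ
  induction ℓ with
  | zero =>
    intro d hd m hm e
    simp only [zero_add, Finset.sum_range_one, pow_zero, mul_one] at hm
    subst hm
    rw [Finset.prod_range_one]
    refine Finset.sum_congr rfl fun i hi => ?_
    rw [if_neg (steinberg_aux_not_dvd p hp (hd 0 le_rfl)
      (by simpa [Nat.lt_succ_iff] using hi))]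
    congr 1
    ring
  | succ ℓ IH =>
    intro d hd m hm e
    haveI : Fact p.Prime := ⟨hp⟩
    set d0 := d 0 with hd0
    set m' := ∑ j ∈ Finset.range (ℓ + 1), d (j + 1) * p ^ j with hm'
    have hd0p : d0 < p := hd 0 (by omega)
    have h1 : ∑ j ∈ Finset.range (ℓ + 1), d (j + 1) * p ^ (j + 1) = p * m' := by
      rw [hm', Finset.mul_sum]
      exact Finset.sum_congr rfl fun j _ => by ring
    have hmeq : m = d0 + p * m' := by
      rw [hm, Finset.sum_range_succ', pow_zero, mul_one, h1, add_comm]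
    have hmod : m % p = d0 := by
      rw [hmeq, Nat.add_mul_mod_self_left, Nat.mod_eq_of_lt hd0p]
    have hdiv : m / p = m' := by
      rw [hmeq, Nat.add_mul_div_left _ _ hp.pos, Nat.div_eq_of_lt hd0p, zero_add]
    have hlucas : ∀ i : ℕ,
        (p ∣ m.choose i ↔ p ∣ d0.choose (i % p) * m'.choose (i / p)) := by
      intro i
      have h := Choose.choose_modEq_choose_mod_mul_choose_div_nat (p := p) (n := m) (k := i)
      rw [hmod, hdiv] at h
      constructor
      · intro hh
        exact Nat.modEq_zero_iff_dvd.mp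
          (h.symm.trans (Nat.modEq_zero_iff_dvd.mpr hh))
      · intro hh
        exact Nat.modEq_zero_iff_dvd.mp
          (h.trans (Nat.modEq_zero_iff_dvd.mpr hh))
    have hzero : ∀ i : ℕ, d0 < i % p → p ∣ m.choose i := fun i hi =>
      (hlucas i).mpr (by rw [Nat.choose_eq_zero_of_lt hi, zero_mul]; exact dvd_zero p)
    have hdvd_iff : ∀ i : ℕ, i % p ≤ d0 → (p ∣ m.choose i ↔ p ∣ m'.choose (i / p)) := by
      intro i hi
      rw [hlucas i, hp.dvd_mul]
      have := steinberg_aux_not_dvd p hp hd0p hi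
      tauto
    -- LHS
    rw [Finset.prod_range_succ']
    have hfac : ∀ j ∈ Finset.range (ℓ + 1),
        (∑ k ∈ Finset.range (d (j + 1) + 1),
            (T (e * (p : ℤ) ^ (j + 1) * ((d (j + 1) : ℤ) - 2 * (k : ℤ))) :
              LaurentPolynomial ℤ))
          = ∑ k ∈ Finset.range (d (j + 1) + 1),
              T ((e * p) * (p : ℤ) ^ j * ((d (j + 1) : ℤ) - 2 * (k : ℤ))) := by
      intro j _
      refine Finset.sum_congr rfl fun k _ => ?_
      congr 1
      ring
    rw [Finset.prod_congr rfl hfac,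
      IH (fun j => d (j + 1)) (fun j hj => hd (j + 1) (by omega)) m' hm' (e * p)]
    -- RHS
    set g : ℕ → LaurentPolynomial ℤ :=
      fun i => if p ∣ m.choose i then 0 else T (e * ((m : ℤ) - 2 * (i : ℤ))) with hg
    have hmlt : m + 1 ≤ p * (m' + 1) := by nlinarith [hp.two_le]
    have stepA : ∑ i ∈ Finset.range (m + 1), g i = ∑ i ∈ Finset.range (p * (m' + 1)), g i := by
      refine Finset.sum_subset (Finset.range_subset_range.mpr hmlt) ?_
      intro i _ hi
      rw [Finset.mem_range, not_lt] at hi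
      simp only [hg]
      rw [if_pos (by rw [Nat.choose_eq_zero_of_lt (by omega)]; exact dvd_zero p)]
    have stepB : ∑ i ∈ Finset.range (p * (m' + 1)), g i
        = ∑ x ∈ Finset.range (m' + 1) ×ˢ Finset.range p, g (x.2 + p * x.1) := by
      refine Finset.sum_nbij' (fun i => (i / p, i % p)) (fun x => x.2 + p * x.1)
        ?_ ?_ ?_ ?_ ?_
      · intro i hi
        rw [Finset.mem_range] at hi
        rw [Finset.mem_product, Finset.mem_range, Finset.mem_range]
        exact ⟨Nat.div_lt_iff_lt_mul hp.pos |>.mpr (by rw [mul_comm]; exact hi),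
          Nat.mod_lt _ hp.pos⟩
      · intro x hx
        rw [Finset.mem_product, Finset.mem_range, Finset.mem_range] at hx
        rw [Finset.mem_range]
        have := Nat.mul_le_mul_left p (Nat.lt_succ_iff.mp hx.1)
        have := hx.2
        nlinarith
      · intro i _
        exact Nat.mod_add_div i p
      · intro x hx
        rw [Finset.mem_product, Finset.mem_range, Finset.mem_range] at hx
        ext
        · simp only
          rw [Nat.add_mul_div_left _ _ hp.pos, Nat.div_eq_of_lt hx.2, zero_add]
        · simp only
          rw [Nat.add_mul_mod_self_left, Nat.mod_eq_of_lt hx.2]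
      · intro i _
        rw [Nat.mod_add_div]
    rw [stepA, stepB, Finset.sum_product, Finset.sum_mul]
    refine Finset.sum_congr rfl fun i' hi' => ?_
    rw [Finset.mem_range, Nat.lt_succ_iff] at hi'
    have stepC : ∑ k ∈ Finset.range p, g (k + p * i')
        = ∑ k ∈ Finset.range (d0 + 1), g (k + p * i') := by
      refine (Finset.sum_subset (Finset.range_subset_range.mpr (by omega)) ?_).symm
      intro k hk hk2
      rw [Finset.mem_range] at hk
      rw [Finset.mem_range, not_lt] at hk2
      simp only [hg]
      rw [if_pos (hzero _ (by rw [Nat.add_mul_mod_self_left, Nat.mod_eq_of_lt hk]; omega))]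
    rw [stepC, Finset.mul_sum]
    refine Finset.sum_congr rfl fun k hk => ?_
    rw [Finset.mem_range, Nat.lt_succ_iff] at hk
    have hkmod : (k + p * i') % p = k := by
      rw [Nat.add_mul_mod_self_left, Nat.mod_eq_of_lt (by omega)]
    have hkdiv : (k + p * i') / p = i' := by
      rw [Nat.add_mul_div_left _ _ hp.pos, Nat.div_eq_of_lt (by omega), zero_add]
    simp only [hg]
    rw [ite_mul, zero_mul, ← LaurentPolynomial.T_add]
    refine if_congr ?_ rfl ?_
    · rw [hdvd_iff _ (by omega), hkdiv]
    · congr 1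
      have : (m : ℤ) = (d0 : ℤ) + (p : ℤ) * (m' : ℤ) := by exact_mod_cast congrArg Nat.cast hmeq
      push_cast
      rw [this]
      ring

/-- Let `p` be a prime and `m` a natural number with base-`p` expansion
`m = Σ_{j=0}^{ℓ} m_j p^j`, `0 ≤ m_j < p`.  Then in `ℤ[X, X⁻¹]` one has
`∏_{j=0}^{ℓ} (Σ_{k=0}^{m_j} X^{p^j (m_j − 2k)}) = Σ_{i=0}^{m} c_i X^{m − 2i}`
where `c_i = 1` if `p ∤ C(m,i)` and `c_i = 0` otherwise.
(Here `T e` denotes `X^e` in the Laurent polynomial ring `ℤ[T;T⁻¹]`.) -/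
theorem steinberg_character_binomial_vanishing
    (p : ℕ) (hp : p.Prime) (m : ℕ)
    (ℓ : ℕ) (d : ℕ → ℕ)
    (hdig : ∀ j ≤ ℓ, d j < p)
    (hexp : m = ∑ j ∈ Finset.range (ℓ + 1), d j * p ^ j) :
    (∏ j ∈ Finset.range (ℓ + 1),
        ∑ k ∈ Finset.range (d j + 1),
          (T ((p : ℤ) ^ j * ((d j : ℤ) - 2 * (k : ℤ))) : LaurentPolynomial ℤ))
      = ∑ i ∈ Finset.range (m + 1),
          if p ∣ m.choose i then 0
          else T ((m : ℤ) - 2 * (i : ℤ)) := by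
  have h := steinberg_aux p hp ℓ d hdig m hexp 1
  simpa using h
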